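/- For all natural numbers n ≥ 1 and r with 1 ≤ r ≤ n, ∫₀¹ (log(1 − x))² · x^{r−1}(1 − x)^{n−r} / B(r, n+1−r) dx = (H_n − H_{n−r})² + ∑_{k=n+1−r}^{n} 1/k², where B denotes the Beta function and H_m := ∑_{k=1}^{m} 1/k is the m-th harmonic number (H_0 := 0). -/

import Mathlib

open Real MeasureTheory intervalIntegral Set

/-- `harmonicR m = H_m = ∑_{k=1}^m 1/k`, with `H_0 = 0`. -/
noncomputable def harmonicR (m : ℕ) : ℝ := ∑ k ∈ Finset.range m, (1 : ℝ) / (k + 1)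

/-- The Beta function at natural arguments: `B(a, b) = ∫₀¹ t^(a−1) (1−t)^(b−1) dt`. -/
noncomputable def betaFn (a b : ℕ) : ℝ := ∫ t in (0 : ℝ)..1, t ^ (a - 1) * (1 - t) ^ (b - 1)

lemma logsq_le_bound {u : ℝ} (h0 : 0 < u) (h1 : u ≤ 1) :
    (Real.log u) ^ 2 ≤ 16 * u ^ (-(1/2) : ℝ) := by
  set v : ℝ := u ^ (-(1/4) : ℝ) with hv
  have hvpos : 0 < v := Real.rpow_pos_of_pos h0 _
  have hlogv : Real.log v = -(1/4) * Real.log u := Real.log_rpow h0 _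
  have hlogu_nonpos : Real.log u ≤ 0 := Real.log_nonpos h0.le h1
  have hlv_nonneg : 0 ≤ Real.log v := by nlinarith
  have hlv_le : Real.log v ≤ v := (Real.log_le_sub_one_of_pos hvpos).trans (by linarith)
  have h2 : (Real.log v) ^ 2 ≤ v ^ 2 := by nlinarith
  have hv2 : v ^ 2 = u ^ (-(1/2) : ℝ) := by
    rw [hv, ← Real.rpow_natCast (u ^ (-(1/4):ℝ)) 2, ← Real.rpow_mul h0.le]
    norm_num
  have : (Real.log u) ^ 2 = 16 * (Real.log v) ^ 2 := by
    rw [hlogv]; ring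
  rw [this, ← hv2]; nlinarith

lemma intLogSq (a b : ℕ) :
    IntervalIntegrable (fun u : ℝ => (Real.log u) ^ 2 * ((1 - u) ^ a * u ^ b))
      volume 0 1 := by
  have hbound : IntervalIntegrable (fun u : ℝ => 16 * u ^ (-(1/2) : ℝ)) volume 0 1 :=
    (intervalIntegrable_rpow' (by norm_num)).const_mul 16
  refine hbound.mono_fun ?_ ?_
  · exact ((Real.measurable_log.pow_const 2).mul
      (((measurable_const.sub measurable_id').pow_const a).mul
        (measurable_id'.pow_const b))).aestronglyMeasurable
  · rw [Filter.EventuallyLE, ae_restrict_iff' measurableSet_uIoc]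
    refine Filter.Eventually.of_forall fun x hx => ?_
    rw [Set.uIoc_of_le (by norm_num : (0:ℝ) ≤ 1)] at hx
    obtain ⟨hx0, hx1⟩ := hx
    have h1 : (0:ℝ) ≤ (1 - x) ^ a := pow_nonneg (by linarith) a
    have h2 : (1 - x) ^ a ≤ 1 := pow_le_one₀ (by linarith) (by linarith)
    have h3 : (0:ℝ) ≤ x ^ b := pow_nonneg hx0.le b
    have h4 : x ^ b ≤ 1 := pow_le_one₀ hx0.le hx1
    have hrp : (0:ℝ) < x ^ (-(1/2) : ℝ) := Real.rpow_pos_of_pos hx0 _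
    simp only [Real.norm_eq_abs]
    rw [abs_of_nonneg (by positivity), abs_of_nonneg (by positivity)]
    calc (Real.log x) ^ 2 * ((1 - x) ^ a * x ^ b)
        ≤ (Real.log x) ^ 2 * 1 := by
          apply mul_le_mul_of_nonneg_left _ (sq_nonneg _)
          calc (1 - x) ^ a * x ^ b ≤ 1 * 1 := mul_le_mul h2 h4 h3 zero_le_one
          _ = 1 := by ring
      _ = (Real.log x) ^ 2 := by ring
      _ ≤ 16 * x ^ (-(1/2) : ℝ) := logsq_le_bound hx0 hx1

lemma hasDerivAt_G (b : ℕ) {x : ℝ} (hx : 0 < x) :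
    HasDerivAt (fun x : ℝ => x ^ (b+1) * (Real.log x) ^ 2 / ((b:ℝ)+1)
        - 2 * (x ^ (b+1) * Real.log x) / ((b:ℝ)+1) ^ 2
        + 2 * x ^ (b+1) / ((b:ℝ)+1) ^ 3)
      (x ^ b * (Real.log x) ^ 2) x := by
  have hb : ((b:ℝ)+1) ≠ 0 := by positivity
  have hp : HasDerivAt (fun x : ℝ => x ^ (b+1)) ((↑(b+1)) * x ^ b) x := by
    simpa using hasDerivAt_pow (b+1) x
  have hl : HasDerivAt Real.log x⁻¹ x := Real.hasDerivAt_log hx.ne'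
  have hl2 : HasDerivAt (fun x : ℝ => (Real.log x) ^ 2)
      ((2 : ℕ) * (Real.log x) ^ 1 * x⁻¹) x := hl.pow 2
  have h1 : HasDerivAt (fun x : ℝ => x ^ (b+1) * (Real.log x) ^ 2)
      ((↑(b+1)) * x ^ b * (Real.log x) ^ 2 + x ^ (b+1) * ((2:ℕ) * (Real.log x) ^ 1 * x⁻¹)) x :=
    hp.mul hl2
  have h2 : HasDerivAt (fun x : ℝ => x ^ (b+1) * Real.log x)
      ((↑(b+1)) * x ^ b * Real.log x + x ^ (b+1) * x⁻¹) x := hp.mul hl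
  have H := ((h1.div_const ((b:ℝ)+1)).sub
      ((h2.const_mul 2).div_const (((b:ℝ)+1)^2))).add
      ((hp.const_mul 2).div_const (((b:ℝ)+1)^3))
  refine H.congr_deriv ?_
  have hxne : x ≠ 0 := hx.ne'
  push_cast
  field_simp
  ring

lemma integral_pow_mul_logsq (b : ℕ) :
    ∫ x in (0:ℝ)..1, x ^ b * (Real.log x) ^ 2 = 2 / ((b:ℝ)+1) ^ 3 := by
  set F : ℝ → ℝ := fun x => x ^ b * (2 * (Real.sqrt x * Real.log (Real.sqrt x))) ^ 2 / ((b:ℝ)+1)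
      - 2 * (x ^ b * (x * Real.log x)) / ((b:ℝ)+1) ^ 2
      + 2 * x ^ (b+1) / ((b:ℝ)+1) ^ 3 with hF
  have hcont : ContinuousOn F (Icc 0 1) := by
    apply Continuous.continuousOn
    have c1 : Continuous fun x : ℝ => Real.sqrt x * Real.log (Real.sqrt x) :=
      Real.continuous_mul_log.comp Real.continuous_sqrt
    have c2 : Continuous fun x : ℝ => x * Real.log x := Real.continuous_mul_log
    fun_prop
  have hderiv : ∀ x ∈ Ioo (0:ℝ) 1, HasDerivAt F (x ^ b * (Real.log x) ^ 2) x := by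
    intro x hx
    refine (hasDerivAt_G b hx.1).congr_of_eventuallyEq ?_
    filter_upwards [eventually_gt_nhds hx.1] with y hy
    have hsq : Real.sqrt y ^ 2 = y := Real.sq_sqrt hy.le
    have hls : Real.log (Real.sqrt y) = Real.log y / 2 := Real.log_sqrt hy.le
    rw [hF]
    simp only [hls]
    have : (2 * (Real.sqrt y * (Real.log y / 2))) ^ 2 = y * (Real.log y) ^ 2 := by
      have : (2 * (Real.sqrt y * (Real.log y / 2))) ^ 2
          = Real.sqrt y ^ 2 * (Real.log y) ^ 2 := by ring
      rw [this, hsq]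
    rw [this]
    ring
  have hint : IntervalIntegrable (fun x : ℝ => x ^ b * (Real.log x) ^ 2) volume 0 1 := by
    have := intLogSq 0 b
    simpa [mul_comm] using this
  have := integral_eq_sub_of_hasDerivAt_of_le (by norm_num : (0:ℝ) ≤ 1) hcont hderiv hint
  rw [this, hF]
  simp [Real.sqrt_one, Real.log_one, Real.sqrt_zero, Real.log_zero]

noncomputable def Jfun (a b : ℕ) : ℝ :=
  ∫ x in (0:ℝ)..1, (Real.log (1 - x)) ^ 2 * (x ^ a * (1 - x) ^ b)

noncomputable def Pfun (a b : ℕ) : ℝ :=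
  ∫ x in (0:ℝ)..1, x ^ a * (1 - x) ^ b

lemma intJ (a b : ℕ) :
    IntervalIntegrable (fun x : ℝ => (Real.log (1 - x)) ^ 2 * (x ^ a * (1 - x) ^ b))
      volume 0 1 := by
  have h := ((intLogSq a b).comp_sub_left 1).symm
  norm_num at h
  exact h

lemma Jfun_zero (b : ℕ) : Jfun 0 b = 2 / ((b:ℝ)+1) ^ 3 := by
  have h := intervalIntegral.integral_comp_sub_left (a := (0:ℝ)) (b := 1)
    (fun u : ℝ => (Real.log u) ^ 2 * u ^ b) 1
  norm_num at h
  rw [Jfun]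
  simp only [pow_zero, one_mul]
  rw [h, ← integral_pow_mul_logsq b]
  congr 1
  ext x
  ring

lemma Jfun_rec (a b : ℕ) : Jfun (a+1) b = Jfun a b - Jfun a (b+1) := by
  rw [Jfun, Jfun, Jfun, ← intervalIntegral.integral_sub (intJ a b) (intJ a (b+1))]
  congr 1
  ext x
  ring

lemma Pfun_zero (b : ℕ) : Pfun 0 b = 1 / ((b:ℝ)+1) := by
  have h := intervalIntegral.integral_comp_sub_left (a := (0:ℝ)) (b := 1)
    (fun u : ℝ => u ^ b) 1
  norm_num at h
  rw [Pfun]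
  simp only [pow_zero, one_mul]
  rw [h]
  norm_num

lemma contP (a b : ℕ) : IntervalIntegrable (fun x : ℝ => x ^ a * (1 - x) ^ b) volume 0 1 := by
  apply Continuous.intervalIntegrable
  fun_prop

lemma Pfun_rec (a b : ℕ) : Pfun (a+1) b = Pfun a b - Pfun a (b+1) := by
  rw [Pfun, Pfun, Pfun, ← intervalIntegral.integral_sub (contP a b) (contP a (b+1))]
  congr 1
  ext x
  ring

lemma Pfun_eq (a : ℕ) : ∀ b : ℕ, Pfun a b =
    (a.factorial * b.factorial : ℝ) / (a + b + 1).factorial := by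
  induction a with
  | zero =>
    intro b
    rw [Pfun_zero]
    have : (0 + b + 1).factorial = (b + 1) * b.factorial := by
      rw [Nat.zero_add, Nat.factorial_succ]
    rw [this]
    have hb : (b.factorial : ℝ) ≠ 0 := Nat.cast_ne_zero.2 b.factorial_ne_zero
    push_cast
    field_simp
    simp
  | succ a ih =>
    intro b
    rw [Pfun_rec, ih b, ih (b+1)]
    have e1 : (a + 1 + b + 1) = (a + b + 1) + 1 := by omega
    have e2 : (a + (b+1) + 1) = (a + b + 1) + 1 := by omega
    rw [e1, e2, Nat.factorial_succ (a+b+1), Nat.factorial_succ a, Nat.factorial_succ b]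
    have h1 : ((a+b+1).factorial : ℝ) ≠ 0 := Nat.cast_ne_zero.2 (Nat.factorial_ne_zero _)
    have h2 : ((a:ℝ) + (b:ℝ) + 1 + 1) ≠ 0 := by positivity
    push_cast
    field_simp
    ring

lemma harmonicR_succ (m : ℕ) : harmonicR (m+1) = harmonicR m + 1 / ((m:ℝ)+1) := by
  rw [harmonicR, harmonicR, Finset.sum_range_succ]

lemma sum_Icc_bot (m N : ℕ) (h : m ≤ N) (f : ℕ → ℝ) :
    ∑ k ∈ Finset.Icc m N, f k = f m + ∑ k ∈ Finset.Icc (m+1) N, f k := by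
  rw [Finset.Icc_eq_cons_Ioc h, Finset.sum_cons, ← Finset.Icc_add_one_left_eq_Ioc]

lemma Jfun_eq (a : ℕ) : ∀ b : ℕ, Jfun a b =
    (a.factorial * b.factorial : ℝ) / (a + b + 1).factorial *
      ((harmonicR (a + b + 1) - harmonicR b) ^ 2
        + ∑ k ∈ Finset.Icc (b + 1) (a + b + 1), (1:ℝ) / (k:ℝ) ^ 2) := by
  induction a with
  | zero =>
    intro b
    rw [Jfun_zero]
    simp only [zero_add, Nat.factorial_zero]
    rw [Nat.factorial_succ, Finset.Icc_self, Finset.sum_singleton, harmonicR_succ]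
    have hb : (b.factorial : ℝ) ≠ 0 := Nat.cast_ne_zero.2 b.factorial_ne_zero
    have hb1 : ((b:ℝ)+1) ≠ 0 := by positivity
    push_cast
    field_simp
    ring
  | succ a ih =>
    intro b
    rw [Jfun_rec, ih b, ih (b+1)]
    have e1 : (a + 1 + b + 1) = (a + b + 1) + 1 := by omega
    have e2 : (a + (b+1) + 1) = (a + b + 1) + 1 := by omega
    rw [e1, e2]
    have hs1 : ∑ k ∈ Finset.Icc (b+1) ((a+b+1)+1), (1:ℝ)/(k:ℝ)^2
        = (∑ k ∈ Finset.Icc (b+1) (a+b+1), (1:ℝ)/(k:ℝ)^2) + 1/(((a:ℝ)+(b:ℝ)+1)+1)^2 := by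
      rw [Finset.sum_Icc_succ_top (by omega : b+1 ≤ (a+b+1)+1)]
      push_cast
      ring
    have hs2 : ∑ k ∈ Finset.Icc (b+1+1) ((a+b+1)+1), (1:ℝ)/(k:ℝ)^2
        = (∑ k ∈ Finset.Icc (b+1) ((a+b+1)+1), (1:ℝ)/(k:ℝ)^2) - 1/((b:ℝ)+1)^2 := by
      rw [sum_Icc_bot (b+1) ((a+b+1)+1) (by omega)]
      push_cast
      ring
    rw [hs2, hs1, harmonicR_succ (a+b+1), harmonicR_succ b,
      Nat.factorial_succ (a+b+1), Nat.factorial_succ a, Nat.factorial_succ b]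
    have h1 : ((a+b+1).factorial : ℝ) ≠ 0 := Nat.cast_ne_zero.2 (Nat.factorial_ne_zero _)
    have h2 : ((a:ℝ) + (b:ℝ) + 1 + 1) ≠ 0 := by positivity
    have h3 : ((b:ℝ) + 1) ≠ 0 := by positivity
    push_cast
    field_simp
    ring

/-- The Beta(r, n+1−r) expectation of `log(1−x)²` equals
`(H_n − H_{n−r})² + ∑_{k=n+1−r}^{n} 1/k²`. -/
theorem beta_integral_sq_log (n r : ℕ) (hn : 1 ≤ n) (hr1 : 1 ≤ r) (hrn : r ≤ n) :
    ∫ x in (0 : ℝ)..1,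
        (Real.log (1 - x)) ^ 2 * (x ^ (r - 1) * (1 - x) ^ (n - r) / betaFn r (n + 1 - r))
      = (harmonicR n - harmonicR (n - r)) ^ 2
        + ∑ k ∈ Finset.Icc (n + 1 - r) n, (1 : ℝ) / (k : ℝ) ^ 2 := by
  have hbeq : betaFn r (n + 1 - r) = Pfun (r-1) (n-r) := by
    rw [betaFn, Pfun, (show n + 1 - r - 1 = n - r by omega)]
  have hidx : (r - 1) + (n - r) + 1 = n := by omega
  have hB : betaFn r (n + 1 - r)
      = ((r-1).factorial * (n-r).factorial : ℝ) / n.factorial := by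
    rw [hbeq, Pfun_eq, hidx]
  have hBne : betaFn r (n + 1 - r) ≠ 0 := by
    rw [hB]
    positivity
  have step1 : ∫ x in (0 : ℝ)..1,
        (Real.log (1 - x)) ^ 2 * (x ^ (r - 1) * (1 - x) ^ (n - r) / betaFn r (n + 1 - r))
      = Jfun (r-1) (n-r) / betaFn r (n + 1 - r) := by
    rw [Jfun, ← intervalIntegral.integral_div]
    congr 1
    ext x
    ring
  rw [step1, Jfun_eq, hidx, (show (n - r) + 1 = n + 1 - r by omega), ← hB]
  rw [mul_comm, mul_div_assoc, div_self hBne, mul_one]
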